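/- Under the stated assumptions, for every fixed t ≥ 0 the sequence uₙ(t) = y(t + nT) − n·γ(t) converges as n → ∞ to y_∞(t) = e^{a(t)}·( L(T) + ∫₀ᵗ b(s)e^{−a(s)} ds ), where L(T) = (e^{a(T)}/(1 − e^{a(T)}))·∫₀ᵀ b(s)e^{−a(s)} ds − (e^{a(T)}/(1 − e^{a(T)})²)·∫₀ᵀ β(s)e^{−a(s)} ds and γ(t) = e^{a(t)}·( (e^{a(T)}/(1 − e^{a(T)}))·∫₀ᵀ β(s)e^{−a(s)} ds + ∫₀ᵗ β(s)e^{−a(s)} ds ). -/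

import Mathlib

open MeasureTheory intervalIntegral Real Filter

lemma geom_rec_tendsto (q c : ℝ) (hq0 : 0 ≤ q) (hq1 : q < 1) (x : ℕ → ℝ)
    (hx : ∀ n, x (n + 1) = q * x n + c) :
    Tendsto x atTop (nhds (c / (1 - q))) := by
  have h1q : (1 : ℝ) - q ≠ 0 := by linarith
  set l := c / (1 - q) with hl
  have hql : q * l + c = l := by rw [hl]; field_simp; ring
  have key : ∀ n, x n = q ^ n * (x 0 - l) + l := by
    intro n
    induction n with
    | zero => simp
    | succ n ih =>
      rw [hx n, ih]
      linear_combination hql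
  have h0 : Tendsto (fun n : ℕ => q ^ n * (x 0 - l) + l) atTop (nhds (0 * (x 0 - l) + l)) :=
    ((tendsto_pow_atTop_nhds_zero_of_lt_one hq0 hq1).mul_const _).add_const _
  rw [zero_mul, zero_add] at h0
  exact h0.congr fun n => (key n).symm

/-- For each fixed `t ≥ 0`, `uₙ(t) = y(t + nT) - n γ(t) → y_∞(t)` as `n → ∞`. -/
theorem u_n_tendsto_yInf (lam T : ℝ) (hlam : lam < 0) (hT : 0 < T)
    (ρ : ℝ → ℝ) (hρc : ContinuousOn ρ (Set.Ici 0))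
    (hρp : ∀ t ≥ (0:ℝ), ρ (t + T) = ρ t)
    (hρpos : 0 < ∫ s in (0:ℝ)..T, ρ s)
    (a : ℝ → ℝ) (ha : ∀ t, a t = lam * ∫ s in (0:ℝ)..t, ρ s)
    (b β : ℝ → ℝ) (hbc : ContinuousOn b (Set.Ici 0)) (hβc : ContinuousOn β (Set.Ici 0))
    (hβp : ∀ t ≥ (0:ℝ), β (t + T) = β t)
    (hdrift : ∀ t ≥ (0:ℝ), b (t + T) = b t + β t)
    (y : ℝ → ℝ)
    (hy : ∀ t, y t = Real.exp (a t) * (y 0 + ∫ s in (0:ℝ)..t, b s * Real.exp (-(a s))))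
    (L : ℝ)
    (hL : L = (Real.exp (a T) / (1 - Real.exp (a T))) *
        (∫ s in (0:ℝ)..T, b s * Real.exp (-(a s)))
      - (Real.exp (a T) / (1 - Real.exp (a T)) ^ 2) *
        (∫ s in (0:ℝ)..T, β s * Real.exp (-(a s))))
    (yInf : ℝ → ℝ)
    (hyInf : ∀ t, yInf t = Real.exp (a t) * (L + ∫ s in (0:ℝ)..t, b s * Real.exp (-(a s))))
    (γ : ℝ → ℝ)
    (hγ : ∀ t, γ t = Real.exp (a t) *
      ((Real.exp (a T) / (1 - Real.exp (a T))) * (∫ s in (0:ℝ)..T, β s * Real.exp (-(a s)))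
        + ∫ s in (0:ℝ)..t, β s * Real.exp (-(a s)))) :
    ∀ t ≥ (0:ℝ),
      Tendsto (fun n : ℕ => y (t + n * T) - n * γ t) atTop (nhds (yInf t)) := by
  intro t ht
  have hqpos : 0 < Real.exp (a T) := Real.exp_pos _
  have haT0 : a T < 0 := by
    rw [ha T]; exact mul_neg_of_neg_of_pos hlam hρpos
  set q := Real.exp (a T) with hqdef
  have hq1 : q < 1 := Real.exp_lt_one_iff.mpr haT0
  have hqne : q ≠ 0 := ne_of_gt hqpos
  have h1q : (1:ℝ) - q ≠ 0 := by intro h; linarith [sub_eq_zero.mp h]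
  -- continuity of a on compact subintervals of [0, ∞)
  have hAc : ∀ M : ℝ, 0 ≤ M → ContinuousOn a (Set.Icc 0 M) := by
    intro M hM
    have hρi : IntegrableOn ρ (Set.uIcc 0 M) := by
      rw [Set.uIcc_of_le hM]
      exact (hρc.mono (fun s hs => hs.1)).integrableOn_Icc
    have h1 := intervalIntegral.continuousOn_primitive_interval hρi
    rw [Set.uIcc_of_le hM] at h1
    exact (continuousOn_const.mul h1).congr fun u _ => ha u
  -- integrability of h * exp(-a) on nonnegative intervals
  have hint : ∀ (h : ℝ → ℝ), ContinuousOn h (Set.Ici 0) →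
      ∀ x z : ℝ, 0 ≤ x → 0 ≤ z →
      IntervalIntegrable (fun s => h s * Real.exp (-(a s))) volume x z := by
    intro h hc x z hx hz
    apply ContinuousOn.intervalIntegrable
    have hsub : Set.uIcc x z ⊆ Set.Icc 0 (max x z) :=
      Set.uIcc_subset_Icc ⟨hx, le_max_left x z⟩ ⟨hz, le_max_right x z⟩
    have hsub' : Set.uIcc x z ⊆ Set.Ici 0 := hsub.trans (Set.Icc_subset_Ici_self)
    exact (hc.mono hsub').mul
      (Real.continuous_exp.comp_continuousOn
        (((hAc (max x z) (le_max_of_le_left hx)).mono hsub).neg))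
  have hρint : ∀ x z : ℝ, 0 ≤ x → 0 ≤ z → IntervalIntegrable ρ volume x z := by
    intro x z hx hz
    apply ContinuousOn.intervalIntegrable
    have hsub : Set.uIcc x z ⊆ Set.Ici 0 :=
      (Set.uIcc_subset_Icc ⟨hx, le_max_left x z⟩ ⟨hz, le_max_right x z⟩).trans
        Set.Icc_subset_Ici_self
    exact hρc.mono hsub
  have hfi := hint b hbc
  have hgi := hint β hβc
  -- additivity of a with respect to translation by T
  have haT : ∀ u : ℝ, 0 ≤ u → a (u + T) = a u + a T := by
    intro u hu
    have h1 : (∫ s in (0:ℝ)..T, ρ s) + ∫ s in T..(u+T), ρ s = ∫ s in (0:ℝ)..(u+T), ρ s :=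
      intervalIntegral.integral_add_adjacent_intervals (hρint 0 T le_rfl hT.le)
        (hρint T (u+T) hT.le (by linarith))
    have h2 : ∫ s in (0:ℝ)..u, ρ (s + T) = ∫ s in ((0:ℝ)+T)..(u+T), ρ s :=
      intervalIntegral.integral_comp_add_right _ T
    rw [zero_add] at h2
    have h3 : ∫ s in (0:ℝ)..u, ρ (s + T) = ∫ s in (0:ℝ)..u, ρ s := by
      apply intervalIntegral.integral_congr
      intro s hs
      rw [Set.uIcc_of_le hu] at hs
      exact hρp s hs.1
    rw [ha (u+T), ha u, ha T, ← h1, ← h2, h3]; ring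
  have han : ∀ u : ℝ, 0 ≤ u → ∀ n : ℕ, a (u + n * T) = a u + n * a T := by
    intro u hu n
    induction n with
    | zero => simp
    | succ n ih =>
      have h1 : u + ((n:ℝ)+1) * T = (u + n*T) + T := by ring
      push_cast
      rw [h1, haT (u + n*T) (by positivity), ih]; ring
  have hβn : ∀ u : ℝ, 0 ≤ u → ∀ n : ℕ, β (u + n * T) = β u := by
    intro u hu n
    induction n with
    | zero => simp
    | succ n ih =>
      have h1 : u + ((n:ℝ)+1) * T = (u + n*T) + T := by ring
      push_cast
      rw [h1, hβp (u + n*T) (by positivity), ih]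
  have hbn : ∀ u : ℝ, 0 ≤ u → ∀ n : ℕ, b (u + n * T) = b u + n * β u := by
    intro u hu n
    induction n with
    | zero => simp
    | succ n ih =>
      have h1 : u + ((n:ℝ)+1) * T = (u + n*T) + T := by ring
      push_cast
      rw [h1, hdrift (u + n*T) (by positivity), ih, hβn u hu n]; ring
  -- abbreviations
  set B := ∫ s in (0:ℝ)..T, b s * Real.exp (-(a s)) with hB
  set C := ∫ s in (0:ℝ)..T, β s * Real.exp (-(a s)) with hC
  set Ib := ∫ s in (0:ℝ)..t, b s * Real.exp (-(a s)) with hIb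
  set Iβ := ∫ s in (0:ℝ)..t, β s * Real.exp (-(a s)) with hIβ
  have httT : (0:ℝ) ≤ t + T := by linarith
  have hexp : ∀ (n : ℕ) (s : ℝ), Real.exp (-(a s + n * a T)) = Real.exp (-(a s)) * (q⁻¹) ^ n := by
    intro n s
    rw [neg_add, Real.exp_add, ← mul_neg, Real.exp_nat_mul]
    simp [hqdef, Real.exp_neg]
  -- shifted integrals over [T, t+T]
  have hshiftβ : ∫ s in T..(t+T), β s * Real.exp (-(a s)) = Iβ * q⁻¹ := by
    have h1 : ∫ s in (0:ℝ)..t, β (s+T) * Real.exp (-(a (s+T)))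
        = ∫ s in ((0:ℝ)+T)..(t+T), β s * Real.exp (-(a s)) :=
      intervalIntegral.integral_comp_add_right (fun s => β s * Real.exp (-(a s))) T
    rw [zero_add] at h1
    have h2 : ∫ s in (0:ℝ)..t, β (s+T) * Real.exp (-(a (s+T)))
        = ∫ s in (0:ℝ)..t, (β s * Real.exp (-(a s))) * q⁻¹ := by
      apply intervalIntegral.integral_congr
      intro s hs
      rw [Set.uIcc_of_le ht] at hs
      show β (s + T) * Real.exp (-(a (s + T))) = β s * Real.exp (-(a s)) * q⁻¹
      rw [hβp s hs.1, haT s hs.1, neg_add, Real.exp_add]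
      rw [hqdef, ← Real.exp_neg]
      ring
    rw [← h1, h2, intervalIntegral.integral_mul_const, ← hIβ]
  have hshiftb : ∫ s in T..(t+T), b s * Real.exp (-(a s)) = (Ib + Iβ) * q⁻¹ := by
    have h1 : ∫ s in (0:ℝ)..t, b (s+T) * Real.exp (-(a (s+T)))
        = ∫ s in ((0:ℝ)+T)..(t+T), b s * Real.exp (-(a s)) :=
      intervalIntegral.integral_comp_add_right (fun s => b s * Real.exp (-(a s))) T
    rw [zero_add] at h1
    have h2 : ∫ s in (0:ℝ)..t, b (s+T) * Real.exp (-(a (s+T)))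
        = ∫ s in (0:ℝ)..t, (b s * Real.exp (-(a s)) + β s * Real.exp (-(a s))) * q⁻¹ := by
      apply intervalIntegral.integral_congr
      intro s hs
      rw [Set.uIcc_of_le ht] at hs
      show b (s + T) * Real.exp (-(a (s + T)))
        = (b s * Real.exp (-(a s)) + β s * Real.exp (-(a s))) * q⁻¹
      rw [hdrift s hs.1, haT s hs.1, neg_add, Real.exp_add]
      rw [hqdef, ← Real.exp_neg]
      ring
    rw [← h1, h2, intervalIntegral.integral_mul_const,
      intervalIntegral.integral_add (hfi 0 t le_rfl ht) (hgi 0 t le_rfl ht), ← hIb, ← hIβ]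
  -- splitting at t
  have hsplitT_f : ∫ s in t..T, b s * Real.exp (-(a s)) = B - Ib := by
    have h1 := intervalIntegral.integral_add_adjacent_intervals
      (hfi 0 t le_rfl ht) (hfi t T ht hT.le)
    rw [hB, hIb]; rw [← hIb] at h1; linarith
  have hsplitT_g : ∫ s in t..T, β s * Real.exp (-(a s)) = C - Iβ := by
    have h1 := intervalIntegral.integral_add_adjacent_intervals
      (hgi 0 t le_rfl ht) (hgi t T ht hT.le)
    rw [hC, hIβ]; rw [← hIβ] at h1; linarith
  have hKb : ∫ s in t..(t+T), b s * Real.exp (-(a s)) = (B - Ib) + (Ib + Iβ) * q⁻¹ := by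
    have h1 := intervalIntegral.integral_add_adjacent_intervals
      (hfi t T ht hT.le) (hfi T (t+T) hT.le httT)
    rw [← h1, hsplitT_f, hshiftb]
  have hKβ : ∫ s in t..(t+T), β s * Real.exp (-(a s)) = (C - Iβ) + Iβ * q⁻¹ := by
    have h1 := intervalIntegral.integral_add_adjacent_intervals
      (hgi t T ht hT.le) (hgi T (t+T) hT.le httT)
    rw [← h1, hsplitT_g, hshiftβ]
  have hKγ : Real.exp (a t) * (q * ((C - Iβ) + Iβ * q⁻¹)) = (1-q) * γ t := by
    rw [hγ t, ← hIβ]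
    field_simp
    ring
  -- the recurrence
  have hrec : ∀ n : ℕ, y (t + ((n+1 : ℕ):ℝ) * T) - ((n+1 : ℕ):ℝ) * γ t
      = q * (y (t + (n:ℝ) * T) - (n:ℝ) * γ t)
        + (Real.exp (a t) * (q * ((B - Ib) + (Ib + Iβ) * q⁻¹)) - γ t) := by
    intro n
    push_cast
    have hn0 : (0:ℝ) ≤ t + (n:ℝ) * T := by positivity
    have hn1 : (0:ℝ) ≤ t + ((n:ℝ)+1) * T := by positivity
    have hJ1 : ∫ s in t..(t+T), b (s + (n:ℝ)*T) * Real.exp (-(a (s + (n:ℝ)*T)))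
        = ∫ s in (t + (n:ℝ)*T)..((t+T) + (n:ℝ)*T), b s * Real.exp (-(a s)) :=
      intervalIntegral.integral_comp_add_right (fun s => b s * Real.exp (-(a s))) ((n:ℝ)*T)
    have e2 : (t+T) + (n:ℝ)*T = t + ((n:ℝ)+1)*T := by ring
    rw [e2] at hJ1
    have hJ2 : ∫ s in t..(t+T), b (s + (n:ℝ)*T) * Real.exp (-(a (s + (n:ℝ)*T)))
        = ∫ s in t..(t+T),
            (b s * Real.exp (-(a s)) + (n:ℝ) * (β s * Real.exp (-(a s)))) * (q⁻¹)^n := by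
      apply intervalIntegral.integral_congr
      intro s hs
      rw [Set.uIcc_of_le (by linarith : t ≤ t + T)] at hs
      have hs0 : 0 ≤ s := le_trans ht hs.1
      show b (s + (n:ℝ)*T) * Real.exp (-(a (s + (n:ℝ)*T)))
        = (b s * Real.exp (-(a s)) + (n:ℝ) * (β s * Real.exp (-(a s)))) * (q⁻¹)^n
      rw [hbn s hs0 n, han s hs0 n, hexp n s]
      ring
    have hJ3 : ∫ s in t..(t+T),
          (b s * Real.exp (-(a s)) + (n:ℝ) * (β s * Real.exp (-(a s)))) * (q⁻¹)^n
        = (((B - Ib) + (Ib + Iβ) * q⁻¹) + (n:ℝ) * ((C - Iβ) + Iβ * q⁻¹)) * (q⁻¹)^n := by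
      rw [intervalIntegral.integral_mul_const,
        intervalIntegral.integral_add (hfi t (t+T) ht httT)
          ((hgi t (t+T) ht httT).const_mul _),
        intervalIntegral.integral_const_mul, hKb, hKβ]
    have hJc : ∫ s in (t + (n:ℝ)*T)..(t + ((n:ℝ)+1)*T), b s * Real.exp (-(a s))
        = (((B - Ib) + (Ib + Iβ) * q⁻¹) + (n:ℝ) * ((C - Iβ) + Iβ * q⁻¹)) * (q⁻¹)^n := by
      rw [← hJ1, hJ2, hJ3]
    have hsplit : (∫ s in (0:ℝ)..(t + (n:ℝ)*T), b s * Real.exp (-(a s)))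
        + ∫ s in (t + (n:ℝ)*T)..(t + ((n:ℝ)+1)*T), b s * Real.exp (-(a s))
        = ∫ s in (0:ℝ)..(t + ((n:ℝ)+1)*T), b s * Real.exp (-(a s)) :=
      intervalIntegral.integral_add_adjacent_intervals
        (hfi 0 (t + (n:ℝ)*T) le_rfl hn0) (hfi (t + (n:ℝ)*T) (t + ((n:ℝ)+1)*T) hn0 hn1)
    have e1 : a (t + ((n:ℝ)+1) * T) = a t + ((n:ℝ)+1) * a T := by
      have h := han t ht (n+1); push_cast at h; exact h
    have e0 : a (t + (n:ℝ) * T) = a t + (n:ℝ) * a T := han t ht n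
    have hxq1 : Real.exp (a t + ((n:ℝ)+1) * a T) = (Real.exp (a t) * q) * q ^ n := by
      rw [show a t + ((n:ℝ)+1)*a T = (a t + a T) + (n:ℝ)*a T from by ring,
        Real.exp_add, Real.exp_add, Real.exp_nat_mul, ← hqdef]
    have hxq0 : Real.exp (a t + (n:ℝ) * a T) = Real.exp (a t) * q ^ n := by
      rw [Real.exp_add, Real.exp_nat_mul, ← hqdef]
    have hqq : q ^ n * (q⁻¹) ^ n = 1 := by
      rw [← mul_pow, mul_inv_cancel₀ hqne, one_pow]
    rw [hy (t + ((n:ℝ)+1)*T), hy (t + (n:ℝ)*T), e1, e0, hxq1, hxq0, ← hsplit, hJc]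
    linear_combination (Real.exp (a t) * q *
        (((B - Ib) + (Ib + Iβ) * q⁻¹) + (n:ℝ) * ((C - Iβ) + Iβ * q⁻¹))) * hqq
      + (n:ℝ) * hKγ
  -- conclude
  have hconv := geom_rec_tendsto q
    (Real.exp (a t) * (q * ((B - Ib) + (Ib + Iβ) * q⁻¹)) - γ t) hqpos.le hq1
    (fun n : ℕ => y (t + n * T) - n * γ t) (fun n => hrec n)
  have hval : (Real.exp (a t) * (q * ((B - Ib) + (Ib + Iβ) * q⁻¹)) - γ t) / (1-q)
      = yInf t := by
    rw [hyInf t, hL, hγ t, ← hIb, ← hIβ]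
    field_simp
    ring
  rw [← hval]
  exact hconv
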